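/- Let X be a topological space, let s and t be disjoint closed subsets of X, and let f : X → I be a continuous map with f(s) ⊆ {0} and f(t) ⊆ {1}. Define λ : X → I₀¹ by λ(x) = Sum.inr false if x ∈ s, λ(x) = Sum.inr true if x ∈ t, and λ(x) = Sum.inl (f x) otherwise. Then λ is continuous, ι ∘ λ = f (as maps into I, after composing f with Sum.inl where needed), and π ∘ λ sends each x ∈ s to L, each x ∈ t to R, and every other point to c. -/

import Mathlib

open unitInterval

/-- The interval with doubled endpoints: `[0,1]` together with extra points
`0' = Sum.inr false` and `1' = Sum.inr true`, with `0 ⤳ 0'` and `1 ⤳ 1'`. -/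
def I01 : Type := unitInterval ⊕ Bool

instance : TopologicalSpace I01 where
  IsOpen U := IsOpen (Sum.inl ⁻¹' U : Set unitInterval) ∧
    (Sum.inr false ∈ U → Sum.inl (0 : unitInterval) ∈ U) ∧
    (Sum.inr true ∈ U → Sum.inl (1 : unitInterval) ∈ U)
  isOpen_univ := ⟨isOpen_univ, fun _ => trivial, fun _ => trivial⟩
  isOpen_inter U V hU hV := ⟨hU.1.inter hV.1,
    fun h => ⟨hU.2.1 h.1, hV.2.1 h.2⟩, fun h => ⟨hU.2.2 h.1, hV.2.2 h.2⟩⟩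
  isOpen_sUnion S hS := by
    refine ⟨?_, ?_, ?_⟩
    · convert isOpen_biUnion fun U hU => (hS U hU).1 using 1
      ext x
      exact ⟨fun ⟨U, hU, h⟩ => Set.mem_biUnion hU h, fun h => by
        obtain ⟨U, hU, h⟩ := Set.mem_iUnion₂.1 h
        exact ⟨U, hU, h⟩⟩
    · rintro ⟨U, hU, hmem⟩
      exact ⟨U, hU, (hS U hU).2.1 hmem⟩
    · rintro ⟨U, hU, hmem⟩
      exact ⟨U, hU, (hS U hU).2.2 hmem⟩

/-- The three-point space with an open point `c` and two closed points `L`, `R`. -/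
inductive V : Type
  | L | c | R

instance : TopologicalSpace V where
  IsOpen U := (V.L ∈ U → V.c ∈ U) ∧ (V.R ∈ U → V.c ∈ U)
  isOpen_univ := ⟨fun _ => trivial, fun _ => trivial⟩
  isOpen_inter U W hU hW := ⟨fun h => ⟨hU.1 h.1, hW.1 h.2⟩, fun h => ⟨hU.2 h.1, hW.2 h.2⟩⟩
  isOpen_sUnion S hS := by
    constructor
    · rintro ⟨U, hU, hmem⟩
      exact ⟨U, hU, (hS U hU).1 hmem⟩
    · rintro ⟨U, hU, hmem⟩
      exact ⟨U, hU, (hS U hU).2 hmem⟩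

/-- The map `π : I₀¹ → V` collapsing `[0,1]` to the open point `c`. -/
def pi1 : I01 → V
  | Sum.inl _ => V.c
  | Sum.inr false => V.L
  | Sum.inr true => V.R

/-- The map `ι : I₀¹ → [0,1]` collapsing the doubled endpoints. -/
def iota : I01 → unitInterval
  | Sum.inl x => x
  | Sum.inr false => 0
  | Sum.inr true => 1


/-- given disjoint closed `s, t` and a continuous `f : X → [0,1]` with
`f(s) ⊆ {0}`, `f(t) ⊆ {1}`, the map `λ` sending `s` to `0'`, `t` to `1'`, and every other
point `x` to `f x ∈ [0,1]` is continuous, satisfies `ι ∘ λ = f`, and `π ∘ λ` sends `s` to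
`L`, `t` to `R`, and every other point to `c`. -/
theorem lift_of_urysohn_function (X : Type) [TopologicalSpace X] (s t : Set X)
    (hs : IsClosed s) (ht : IsClosed t) (hst : Disjoint s t)
    (f : X → unitInterval) (hf : Continuous f)
    (hf0 : ∀ x ∈ s, f x = 0) (hf1 : ∀ x ∈ t, f x = 1)
    (lam : X → I01)
    (hlam_s : ∀ x ∈ s, lam x = Sum.inr false)
    (hlam_t : ∀ x ∈ t, lam x = Sum.inr true)
    (hlam_o : ∀ x, x ∉ s → x ∉ t → lam x = Sum.inl (f x)) :
    Continuous lam ∧ iota ∘ lam = f ∧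
      (∀ x ∈ s, pi1 (lam x) = V.L) ∧ (∀ x ∈ t, pi1 (lam x) = V.R) ∧
      (∀ x, x ∉ s → x ∉ t → pi1 (lam x) = V.c) := by
  classical
  have hcont : Continuous lam := by
    rw [continuous_def]
    intro U hU
    obtain ⟨hW, h0, h1⟩ := hU
    by_cases hF : Sum.inr false ∈ U <;> by_cases hT : Sum.inr true ∈ U
    · have hEq : lam ⁻¹' U = f ⁻¹' (Sum.inl ⁻¹' U) := by
        ext x
        by_cases hxs : x ∈ s
        · simp [Set.mem_preimage, hlam_s x hxs, hf0 x hxs, hF, h0 hF]; exact iff_of_true hF (h0 hF)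
        by_cases hxt : x ∈ t
        · simp [Set.mem_preimage, hlam_t x hxt, hf1 x hxt, hT, h1 hT]; exact iff_of_true hT (h1 hT)
        · simp [Set.mem_preimage, hlam_o x hxs hxt]; exact Iff.rfl
      rw [hEq]; exact hW.preimage hf
    · have hEq : lam ⁻¹' U = f ⁻¹' (Sum.inl ⁻¹' U) ∩ tᶜ := by
        ext x
        by_cases hxs : x ∈ s
        · simp [Set.mem_preimage, hlam_s x hxs, hf0 x hxs, hF, h0 hF,
            Set.disjoint_left.mp hst hxs]; exact iff_of_true hF (h0 hF)
        by_cases hxt : x ∈ t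
        · simp [Set.mem_preimage, hlam_t x hxt, hT, hxt]; exact hT
        · simp [Set.mem_preimage, hlam_o x hxs hxt, hxt]; exact Iff.rfl
      rw [hEq]; exact (hW.preimage hf).inter ht.isOpen_compl
    · have hEq : lam ⁻¹' U = f ⁻¹' (Sum.inl ⁻¹' U) ∩ sᶜ := by
        ext x
        by_cases hxs : x ∈ s
        · simp [Set.mem_preimage, hlam_s x hxs, hF, hxs]; exact hF
        by_cases hxt : x ∈ t
        · simp [Set.mem_preimage, hlam_t x hxt, hf1 x hxt, hT, h1 hT, hxs]; exact iff_of_true hT (h1 hT)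
        · simp [Set.mem_preimage, hlam_o x hxs hxt, hxs]; exact Iff.rfl
      rw [hEq]; exact (hW.preimage hf).inter hs.isOpen_compl
    · have hEq : lam ⁻¹' U = f ⁻¹' (Sum.inl ⁻¹' U) ∩ (sᶜ ∩ tᶜ) := by
        ext x
        by_cases hxs : x ∈ s
        · simp [Set.mem_preimage, hlam_s x hxs, hF, hxs]; exact hF
        by_cases hxt : x ∈ t
        · simp [Set.mem_preimage, hlam_t x hxt, hT, hxt]; exact hT
        · simp [Set.mem_preimage, hlam_o x hxs hxt, hxs, hxt]; exact Iff.rfl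
      rw [hEq]; exact (hW.preimage hf).inter (hs.isOpen_compl.inter ht.isOpen_compl)
  refine ⟨hcont, ?_, ?_, ?_, ?_⟩
  · funext x
    by_cases hxs : x ∈ s
    · simp [Function.comp, hlam_s x hxs, hf0 x hxs, iota]
    by_cases hxt : x ∈ t
    · simp [Function.comp, hlam_t x hxt, hf1 x hxt, iota]
    · simp [Function.comp, hlam_o x hxs hxt, iota]
  · intro x hxs; rw [hlam_s x hxs]; rfl
  · intro x hxt; rw [hlam_t x hxt]; rfl
  · intro x hxs hxt; rw [hlam_o x hxs hxt]; rfl
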